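/- Sorting via heaps is correct: for every list l, H2list (foldr istH Empty l) equals insertion sort of l. -/

import Mathlib

variable {α : Type*}

def merge [LinearOrder α] : List α → List α → List α
  | [], l => l
  | l, [] => l
  | h1 :: t1, h2 :: t2 =>
    if h1 ≤ h2 then h1 :: merge t1 (h2 :: t2) else h2 :: merge (h1 :: t1) t2
termination_by l1 l2 => l1.length + l2.length

def insrt [LinearOrder α] (x : α) : List α → List α
  | [] => [x]
  | h :: t => if x ≤ h then x :: h :: t else h :: insrt x t

inductive BTree (α : Type*) where
  | Empty : BTree α
  | Node : α → BTree α → BTree α → BTree α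


inductive AllT (p : α → Prop) : BTree α → Prop
  | empty : AllT p BTree.Empty
  | node : ∀ {x l r}, p x → AllT p l → AllT p r → AllT p (BTree.Node x l r)

inductive BST [LinearOrder α] : BTree α → Prop
  | empty : BST BTree.Empty
  | node : ∀ {x : α} {l r}, AllT (· < x) l → AllT (x ≤ ·) r → BST l → BST r →
      BST (BTree.Node x l r)

inductive HEAP [LinearOrder α] : BTree α → Prop
  | empty : HEAP BTree.Empty
  | node : ∀ {x : α} {l r}, AllT (x ≤ ·) l → AllT (x ≤ ·) r → HEAP l → HEAP r →
      HEAP (BTree.Node x l r)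

def istBST [LinearOrder α] (x : α) : BTree α → BTree α
  | BTree.Empty => BTree.Node x BTree.Empty BTree.Empty
  | BTree.Node y l r => if x < y then BTree.Node y (istBST x l) r else BTree.Node y l (istBST x r)

def istH [LinearOrder α] (x : α) : BTree α → BTree α
  | BTree.Empty => BTree.Node x BTree.Empty BTree.Empty
  | BTree.Node y l r => if x < y then BTree.Node x (istH y r) l else BTree.Node y (istH x r) l

def BST2list : BTree α → List α
  | BTree.Empty => []
  | BTree.Node x l r => BST2list l ++ x :: BST2list r

def H2list [LinearOrder α] : BTree α → List α
  | BTree.Empty => []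
  | BTree.Node x l r => x :: merge (H2list l) (H2list r)

def BT2list [LinearOrder α] : BTree α → List α
  | BTree.Empty => []
  | BTree.Node x l r => merge [x] (merge (BT2list l) (BT2list r))

def buildBST [LinearOrder α] (l : List α) : BTree α :=
  l.foldl (fun t x => istBST x t) BTree.Empty

def isort [LinearOrder α] (l : List α) : List α :=
  l.foldr insrt []



open List
theorem merge_perm [LinearOrder α] : ∀ l1 l2 : List α, _root_.merge l1 l2 ~ l1 ++ l2
  | [], l => by simp [_root_.merge]
  | h :: t, [] => by simp [_root_.merge]
  | h1 :: t1, h2 :: t2 => by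
    rw [_root_.merge]
    split
    · exact (merge_perm t1 (h2 :: t2)).cons h1
    · exact ((merge_perm (h1 :: t1) t2).cons h2).trans List.perm_middle.symm
termination_by l1 l2 => l1.length + l2.length

theorem mem_merge' [LinearOrder α] {a : α} {l1 l2 : List α} :
    a ∈ _root_.merge l1 l2 ↔ a ∈ l1 ∨ a ∈ l2 := by
  rw [(merge_perm l1 l2).mem_iff, List.mem_append]

theorem merge_sorted [LinearOrder α] : ∀ l1 l2 : List α, List.Pairwise (· ≤ ·) l1 →
    List.Pairwise (· ≤ ·) l2 → List.Pairwise (· ≤ ·) (_root_.merge l1 l2)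
  | [], l, _, h => by simpa [_root_.merge] using h
  | h :: t, [], h1, _ => by simpa [_root_.merge] using h1
  | h1 :: t1, h2 :: t2, s1, s2 => by
    rw [List.pairwise_cons] at s1 s2
    rw [_root_.merge]
    split
    · rename_i hle
      rw [List.pairwise_cons]
      refine ⟨?_, merge_sorted t1 (h2 :: t2) s1.2 (List.pairwise_cons.2 s2)⟩
      intro b hb
      rcases mem_merge'.1 hb with hb | hb
      · exact s1.1 b hb
      · rcases List.mem_cons.1 hb with rfl | hb
        · exact hle
        · exact le_trans hle (s2.1 b hb)
    · rename_i hle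
      push_neg at hle
      rw [List.pairwise_cons]
      refine ⟨?_, merge_sorted (h1 :: t1) t2 (List.pairwise_cons.2 s1) s2.2⟩
      intro b hb
      rcases mem_merge'.1 hb with hb | hb
      · rcases List.mem_cons.1 hb with rfl | hb
        · exact le_of_lt hle
        · exact le_trans (le_of_lt hle) (s1.1 b hb)
      · exact s2.1 b hb
termination_by l1 l2 => l1.length + l2.length

theorem allT_imp {p q : α → Prop} (h : ∀ a, p a → q a) :
    ∀ {t : BTree α}, AllT p t → AllT q t
  | _, AllT.empty => AllT.empty
  | _, AllT.node hx hl hr => AllT.node (h _ hx) (allT_imp h hl) (allT_imp h hr)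

theorem allT_istH [LinearOrder α] {p : α → Prop} {x : α} :
    ∀ {t : BTree α}, p x → AllT p t → AllT p (istH x t)
  | BTree.Empty, hx, _ => AllT.node hx AllT.empty AllT.empty
  | BTree.Node y l r, hx, AllT.node hy hl hr => by
    rw [istH]
    split
    · exact AllT.node hx (allT_istH hy hr) hl
    · exact AllT.node hy (allT_istH hx hr) hl

theorem heap_istH [LinearOrder α] {x : α} :
    ∀ {t : BTree α}, HEAP t → HEAP (istH x t)
  | BTree.Empty, _ => HEAP.node AllT.empty AllT.empty HEAP.empty HEAP.empty
  | BTree.Node y l r, HEAP.node hl hr Hl Hr => by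
    rw [istH]
    split
    · rename_i hxy
      exact HEAP.node (allT_istH hxy.le (allT_imp (fun a h => le_trans hxy.le h) hr))
        (allT_imp (fun a h => le_trans hxy.le h) hl)
        (heap_istH Hr) Hl
    · rename_i hxy
      push_neg at hxy
      exact HEAP.node (allT_istH hxy hr) hl (heap_istH Hr) Hl

theorem allT_mem_H2list [LinearOrder α] {p : α → Prop} :
    ∀ {t : BTree α}, AllT p t → ∀ a ∈ H2list t, p a
  | _, AllT.empty => by simp [H2list]
  | BTree.Node x l r, AllT.node hx hl hr => by
    intro a ha
    rw [H2list, List.mem_cons] at ha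
    rcases ha with rfl | ha
    · exact hx
    · rcases mem_merge'.1 ha with ha | ha
      · exact allT_mem_H2list hl a ha
      · exact allT_mem_H2list hr a ha

theorem heap_sorted [LinearOrder α] :
    ∀ {t : BTree α}, HEAP t → List.Pairwise (· ≤ ·) (H2list t)
  | _, HEAP.empty => by simp [H2list]
  | BTree.Node x l r, HEAP.node hl hr Hl Hr => by
    rw [H2list, List.pairwise_cons]
    refine ⟨?_, merge_sorted _ _ (heap_sorted Hl) (heap_sorted Hr)⟩
    intro b hb
    rcases mem_merge'.1 hb with hb | hb
    · exact allT_mem_H2list hl b hb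
    · exact allT_mem_H2list hr b hb

theorem H2list_istH_perm [LinearOrder α] (x : α) :
    ∀ t : BTree α, H2list (istH x t) ~ x :: H2list t
  | BTree.Empty => by simp [istH, H2list, _root_.merge]
  | BTree.Node y l r => by
    rw [istH]
    split
    · rw [H2list, H2list]
      refine List.Perm.cons x ?_
      calc _root_.merge (H2list (istH y r)) (H2list l)
          ~ H2list (istH y r) ++ H2list l := merge_perm _ _
        _ ~ (y :: H2list r) ++ H2list l := (H2list_istH_perm y r).append_right _
        _ ~ y :: (H2list l ++ H2list r) :=
            (List.Perm.cons y (List.perm_append_comm))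
        _ ~ y :: _root_.merge (H2list l) (H2list r) :=
            List.Perm.cons y (merge_perm _ _).symm
    · rw [H2list, H2list]
      calc y :: _root_.merge (H2list (istH x r)) (H2list l)
          ~ y :: (H2list (istH x r) ++ H2list l) := (merge_perm _ _).cons y
        _ ~ y :: ((x :: H2list r) ++ H2list l) :=
            ((H2list_istH_perm x r).append_right _).cons y
        _ ~ x :: y :: (H2list l ++ H2list r) :=
            (List.Perm.swap x y _).trans
              (((List.perm_append_comm).cons y).cons x)
        _ ~ x :: y :: _root_.merge (H2list l) (H2list r) :=
            ((merge_perm _ _).symm.cons y).cons x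

theorem foldr_istH_heap [LinearOrder α] (l : List α) :
    HEAP (l.foldr istH BTree.Empty) := by
  induction l with
  | nil => exact HEAP.empty
  | cons x t ih => exact heap_istH ih

theorem foldr_istH_perm [LinearOrder α] (l : List α) :
    H2list (l.foldr istH BTree.Empty) ~ l := by
  induction l with
  | nil => simp [H2list]
  | cons x t ih =>
    exact (H2list_istH_perm x _).trans (ih.cons x)

theorem insrt_eq [LinearOrder α] (x : α) :
    ∀ l : List α, insrt x l = List.orderedInsert (· ≤ ·) x l
  | [] => rfl
  | h :: t => by
    rw [insrt, List.orderedInsert, insrt_eq x t]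

theorem isort_eq [LinearOrder α] (l : List α) :
    isort l = List.insertionSort (· ≤ ·) l := by
  induction l with
  | nil => rfl
  | cons x t ih =>
    simp [isort, List.insertionSort, insrt_eq] at *
    rw [ih]

theorem isortH_correct [LinearOrder α] (l : List α) :
    H2list (l.foldr istH BTree.Empty) = isort l := by
  rw [isort_eq]
  refine (fun hp hs => List.Perm.eq_of_pairwise' (heap_sorted (foldr_istH_heap l)) hs hp) ?_ ?_
  · exact (foldr_istH_perm l).trans (List.perm_insertionSort _ l).symm
  · exact List.pairwise_insertionSort _ l
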